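/- arXiv:2306.10154 — 2 statements merged into one kernel-verified Lean document; each statement's English description precedes it below -/
import Mathlib

section
/- Let k1, k2 be positive integers with k1 > k2 and gcd(k1,k2)=1, and let g1 = p^A(k1+k2 | k1 / 2k1+k2) and g2 = p^A(k1−k2 | k2 / k1), which are Frobenius type-A seaweeds. Then the block of the spectrum matrix of g1 on rows {k1+k2+1,…,2k1+k2} and columns {k1+k2+1,…,2k1+k2} is equal, as a multiset, to the multiset of values of the extended spectrum matrix of g2. -/
namespace Seaweed

/-- Positions `i` and `j` (1-indexed) are joined by an arc of the composition `c`: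
they lie in the same block of `c` and are placed symmetrically within it. -/
def blockPair (c : List ℕ) (i j : ℕ) : Prop :=
  ∃ k, k < c.length ∧ (c.take k).sum < i ∧ (c.take k).sum < j ∧
    i + j = 2 * (c.take k).sum + c.getD k 0 + 1 ∧ i ≠ j

lemma blockPair_symm {c : List ℕ} {i j : ℕ} (h : blockPair c i j) : blockPair c j i := by
  obtain ⟨k, hk, hi, hj, hsum, hne⟩ := h
  exact ⟨k, hk, hj, hi, by omega, hne.symm⟩

/-- The meander `M(a|b)` of the pair of compositions `(a, b)`, as a simple graph on `ℕ`
(positions `1, …, a.sum` carry the meander; all other naturals are isolated).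
Top edges come from `a`, bottom edges from `b`. -/
def meander (a b : List ℕ) : SimpleGraph ℕ where
  Adj i j := blockPair a i j ∨ blockPair b i j
  symm := ⟨fun _ _ h => h.imp blockPair_symm blockPair_symm⟩
  loopless := by
    constructor
    rintro i (⟨k, _, _, _, _, hne⟩ | ⟨k, _, _, _, _, hne⟩) <;> exact hne rfl

/-- The directed-edge relation of the oriented meander: top edges are oriented
right-to-left, bottom edges left-to-right. -/
def dirEdge (a b : List ℕ) (x y : ℕ) : Prop :=
  (blockPair a x y ∧ y < x) ∨ (blockPair b x y ∧ x < y)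

open scoped Classical in
/-- The weight of a walk in the oriented meander: each step taken in agreement with
the orientation counts `+1`, each step against it counts `-1`. -/
noncomputable def walkWeight (a b : List ℕ) {i j : ℕ} (w : (meander a b).Walk i j) : ℤ :=
  (w.darts.map fun d => if dirEdge a b d.toProd.1 d.toProd.2 then (1 : ℤ) else -1).sum

open scoped Classical in
/-- `w(P_{i,j}(a|b))`: the weight of the (unique, when the meander consists of a single
path) path from `v_i` to `v_j` in the oriented meander. -/
noncomputable def pathWeight (a b : List ℕ) (i j : ℕ) : ℤ :=
  if h : ∃ p : (meander a b).Walk i j, p.IsPath then walkWeight a b h.choose else 0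

/-- The meander of `(a, b)` consists of a single path: it has no cycles (in particular no
doubled top/bottom edge, which would be a 2-cycle) and all positions `1, …, n` are
connected.  This is exactly the condition for `p^A(a|b)` to be Frobenius. -/
def IsSinglePath (a b : List ℕ) : Prop :=
  (meander a b).IsAcyclic ∧
  (∀ i j, i ∈ Finset.Icc 1 a.sum → j ∈ Finset.Icc 1 a.sum → (meander a b).Reachable i j) ∧
  ∀ i j, ¬(blockPair a i j ∧ blockPair b i j)

/-- `i` and `j` lie in the same block of the composition `c`. -/
def sameBlock (c : List ℕ) (i j : ℕ) : Prop :=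
  ∃ k, k < c.length ∧ (c.take k).sum < i ∧ i ≤ (c.take k).sum + c.getD k 0 ∧
    (c.take k).sum < j ∧ j ≤ (c.take k).sum + c.getD k 0

/-- The matrix position `(i, j)` belongs to the seaweed `p^A(a|b)`. -/
def seaweedPos (a b : List ℕ) (i j : ℕ) : Prop :=
  (j ≤ i ∧ sameBlock a i j) ∨ (i ≤ j ∧ sameBlock b i j)

open scoped Classical in
/-- The block of the spectrum matrix of `p^A(a|b)` on rows `R` and columns `C`:
the multiset of weights `w(P_{i,j})` over positions `(i,j)` of the seaweed with
`i ∈ R`, `j ∈ C`. -/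
noncomputable def spectrumBlock (a b : List ℕ) (R C : Finset ℕ) : Multiset ℤ :=
  ((R ×ˢ C).filter fun p => seaweedPos a b p.1 p.2).val.map fun p => pathWeight a b p.1 p.2

/-- The multiset of all values of the extended spectrum matrix of `p^A(a|b)`:
the weights `w(P_{i,j})` over all pairs `1 ≤ i, j ≤ n`. -/
noncomputable def extendedValues (a b : List ℕ) : Multiset ℤ :=
  (Finset.Icc 1 a.sum ×ˢ Finset.Icc 1 a.sum).val.map fun p => pathWeight a b p.1 p.2

/-- The spectrum of a Frobenius type-A seaweed `p^A(a|b)`: the multiset of entries of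
its spectrum matrix, with one copy of `0` removed. -/
noncomputable def spectrum (a b : List ℕ) : Multiset ℤ :=
  spectrumBlock a b (Finset.Icc 1 a.sum) (Finset.Icc 1 a.sum) - {0}

/-- The extended spectrum: all entries of the extended spectrum matrix, with one copy
of `0` removed. -/
noncomputable def extendedSpectrum (a b : List ℕ) : Multiset ℤ :=
  extendedValues a b - {0}

/-- Listing the distinct values of the multiset `S` in increasing order, the
corresponding sequence of multiplicities is log-concave. -/
def HasLogConcaveSpectrum (S : Multiset ℤ) : Prop :=
  ∀ i : ℕ, 0 < i → i + 1 < (S.toFinset.sort (· ≤ ·)).length →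
    S.count ((S.toFinset.sort (· ≤ ·)).getD (i - 1) 0) *
      S.count ((S.toFinset.sort (· ≤ ·)).getD (i + 1) 0) ≤
      S.count ((S.toFinset.sort (· ≤ ·)).getD i 0) ^ 2


lemma blockPair_two {x y i j : ℕ} : blockPair [x, y] i j ↔
    ((0 < i ∧ 0 < j ∧ i + j = x + 1 ∧ i ≠ j) ∨
     (x < i ∧ x < j ∧ i + j = 2 * x + y + 1 ∧ i ≠ j)) := by
  constructor
  · rintro ⟨k, hk, h1, h2, h3, h4⟩
    simp only [List.length_cons, List.length_nil] at hk
    interval_cases k <;> simp_all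
  · rintro (⟨hi, hj, hs, hne⟩ | ⟨hi, hj, hs, hne⟩)
    · exact ⟨0, by simp, by simpa, by simpa, by simpa, hne⟩
    · exact ⟨1, by simp, by simpa, by simpa, by simp; omega, hne⟩

lemma blockPair_one {m i j : ℕ} : blockPair [m] i j ↔
    (0 < i ∧ 0 < j ∧ i + j = m + 1 ∧ i ≠ j) := by
  constructor
  · rintro ⟨k, hk, h1, h2, h3, h4⟩
    simp only [List.length_cons, List.length_nil] at hk
    interval_cases k <;> simp_all
  · rintro ⟨hi, hj, hs, hne⟩
    exact ⟨0, by simp, by simpa, by simpa, by simpa, hne⟩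

lemma sameBlock_two {x y i j : ℕ} : sameBlock [x, y] i j ↔
    ((0 < i ∧ i ≤ x ∧ 0 < j ∧ j ≤ x) ∨ (x < i ∧ i ≤ x + y ∧ x < j ∧ j ≤ x + y)) := by
  constructor
  · rintro ⟨k, hk, h1, h2, h3, h4⟩
    simp only [List.length_cons, List.length_nil] at hk
    interval_cases k <;> simp_all <;> omega
  · rintro (⟨h1, h2, h3, h4⟩ | ⟨h1, h2, h3, h4⟩)
    · exact ⟨0, by simp, by simpa, by simpa, by simpa, by simpa⟩
    · exact ⟨1, by simp, by simpa, by simp; omega, by simpa, by simp; omega⟩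

lemma sameBlock_one {m i j : ℕ} : sameBlock [m] i j ↔
    (0 < i ∧ i ≤ m ∧ 0 < j ∧ j ≤ m) := by
  constructor
  · rintro ⟨k, hk, h1, h2, h3, h4⟩
    simp only [List.length_cons, List.length_nil] at hk
    interval_cases k <;> simp_all
  · rintro ⟨h1, h2, h3, h4⟩
    exact ⟨0, by simp, by simpa, by simpa, by simpa, by simpa⟩

lemma blockPair_ne {c : List ℕ} {i j : ℕ} (h : blockPair c i j) : i ≠ j := by
  obtain ⟨k, _, _, _, _, hne⟩ := h; exact hne

/-- Potential rule for top arcs: `f` is one bigger at the left end. -/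
def TopRule (a : List ℕ) (f : ℕ → ℤ) : Prop :=
  ∀ u v, blockPair a u v → u < v → f u = f v + 1

/-- Potential rule for bottom arcs: `f` is one bigger at the right end. -/
def BotRule (b : List ℕ) (f : ℕ → ℤ) : Prop :=
  ∀ u v, blockPair b u v → u < v → f v = f u + 1

open scoped Classical in
lemma step_value {a b : List ℕ} {f : ℕ → ℤ} (ht : TopRule a f) (hb : BotRule b f)
    {u v : ℕ} (h : (meander a b).Adj u v) :
    (if dirEdge a b u v then (1 : ℤ) else -1) = f v - f u := by
  by_cases hd : dirEdge a b u v
  · rw [if_pos hd]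
    rcases hd with ⟨hbp, hlt⟩ | ⟨hbp, hlt⟩
    · have := ht v u (blockPair_symm hbp) hlt; omega
    · have := hb u v hbp hlt; omega
  · rw [if_neg hd]
    have h' : blockPair a u v ∨ blockPair b u v := h
    rcases h' with hbp | hbp
    · rcases lt_or_gt_of_ne (blockPair_ne hbp) with hlt | hlt
      · have := ht u v hbp hlt; omega
      · exact absurd (Or.inl ⟨hbp, hlt⟩) hd
    · rcases lt_or_gt_of_ne (blockPair_ne hbp) with hlt | hlt
      · exact absurd (Or.inr ⟨hbp, hlt⟩) hd
      · have := hb v u (blockPair_symm hbp) hlt; omega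

lemma walk_weight {a b : List ℕ} {f : ℕ → ℤ} (ht : TopRule a f) (hb : BotRule b f)
    {i j : ℕ} (p : (meander a b).Walk i j) : walkWeight a b p = f j - f i := by
  induction p with
  | nil => simp [walkWeight]
  | cons h p ih =>
    rw [walkWeight, SimpleGraph.Walk.darts_cons, List.map_cons, List.sum_cons]
    rw [walkWeight] at ih
    rw [ih, step_value ht hb h]
    ring

lemma pathWeight_eq {a b : List ℕ} {f : ℕ → ℤ} (ht : TopRule a f) (hb : BotRule b f)
    {i j : ℕ} (hr : (meander a b).Reachable i j) : pathWeight a b i j = f j - f i := by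
  have hex : ∃ p : (meander a b).Walk i j, p.IsPath := by
    obtain ⟨w⟩ := hr; exact ⟨w.bypass, w.bypass_isPath⟩
  rw [pathWeight, dif_pos hex]
  exact walk_weight ht hb _

lemma reachable_map {G H : SimpleGraph ℕ} (φ : ℕ → ℕ)
    (hφ : ∀ u v, G.Adj u v → H.Reachable (φ u) (φ v)) {i j : ℕ}
    (h : G.Reachable i j) : H.Reachable (φ i) (φ j) := by
  obtain ⟨w⟩ := h
  induction w with
  | nil => exact SimpleGraph.Reachable.refl _
  | cons h p ih => exact (hφ _ _ h).trans ih

lemma reachable_map' {G H : SimpleGraph ℕ} (φ : ℕ → ℕ)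
    (hφ : ∀ u v, G.Adj u v → H.Reachable (φ u) (φ v)) {i j i' j' : ℕ}
    (h : G.Reachable i j) (hi : φ i = i') (hj : φ j = j') : H.Reachable i' j' :=
  hi ▸ hj ▸ reachable_map φ hφ h



/-- The step-A extension of a potential (case `y < x < 2y`). -/
def fA (x y : ℕ) (f' : ℕ → ℤ) : ℕ → ℤ := fun v =>
  if v ≤ y then -f' (y + 1 - v) - 1 else if v ≤ x then -f' (v - (x - y)) - 2
  else -f' (v - x)

lemma fA_eval1 {x y v : ℕ} (f' : ℕ → ℤ) (h : v ≤ y) :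
    fA x y f' v = -f' (y + 1 - v) - 1 := if_pos h

lemma fA_eval2 {x y v : ℕ} (f' : ℕ → ℤ) (h1 : y < v) (h2 : v ≤ x) :
    fA x y f' v = -f' (v - (x - y)) - 2 := by
  simp only [fA]; rw [if_neg (by omega), if_pos h2]

lemma fA_eval3 {x y v : ℕ} (f' : ℕ → ℤ) (hyx : y ≤ x) (h : x < v) :
    fA x y f' v = -f' (v - x) := by
  simp only [fA]; rw [if_neg (by omega), if_neg (by omega)]

lemma fA_rules {x y : ℕ} {f' : ℕ → ℤ} (hy : 0 < y) (h1 : y < x) (h2 : x < 2 * y)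
    (ht' : TopRule [2 * y - x, x - y] f') (hb' : BotRule [y] f') :
    TopRule [x, y] (fA x y f') ∧ BotRule [x + y] (fA x y f') := by
  constructor
  · intro u v hbp hlt
    rw [blockPair_two] at hbp
    rcases hbp with ⟨hu, hv, hs, hne⟩ | ⟨hu, hv, hs, hne⟩
    · -- top arc in first block: u + v = x + 1
      have huy : u ≤ y := by omega
      rw [fA_eval1 f' huy]
      by_cases hvy : v ≤ y
      · rw [fA_eval1 f' hvy]
        have := ht' (y + 1 - v) (y + 1 - u)
          (blockPair_two.mpr (Or.inl ⟨by omega, by omega, by omega, by omega⟩)) (by omega)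
        omega
      · rw [fA_eval2 f' (by omega) (by omega)]
        have harg : v - (x - y) = y + 1 - u := by omega
        rw [harg]; ring
    · -- top arc in second block: u + v = 2x + y + 1, u, v > x
      rw [fA_eval3 f' (by omega) hu, fA_eval3 f' (by omega) hv]
      have := hb' (u - x) (v - x)
        (blockPair_one.mpr ⟨by omega, by omega, by omega, by omega⟩) (by omega)
      omega
  · intro u v hbp hlt
    rw [blockPair_one] at hbp
    obtain ⟨hu, hv, hs, hne⟩ := hbp
    by_cases huy : u ≤ y
    · rw [fA_eval1 f' huy, fA_eval3 f' (by omega) (by omega)]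
      have harg : v - x = y + 1 - u := by omega
      rw [harg]; ring
    · have hux : u ≤ x := by omega
      have hvy : y < v := by omega
      have hvx : v ≤ x := by omega
      rw [fA_eval2 f' (by omega) hux, fA_eval2 f' hvy hvx]
      have := ht' (u - (x - y)) (v - (x - y))
        (blockPair_two.mpr (Or.inr ⟨by omega, by omega, by omega, by omega⟩)) (by omega)
      omega

/-- The step-B extension of a potential (case `x > 2y`). -/
def fB (x y : ℕ) (f' : ℕ → ℤ) : ℕ → ℤ := fun v =>
  if v ≤ y then f' (x - y + 1 - v) + 1 else if v ≤ x then f' (v - y)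
  else f' (v - 2 * y) + 2

lemma fB_eval1 {x y v : ℕ} (f' : ℕ → ℤ) (h : v ≤ y) :
    fB x y f' v = f' (x - y + 1 - v) + 1 := if_pos h

lemma fB_eval2 {x y v : ℕ} (f' : ℕ → ℤ) (h1 : y < v) (h2 : v ≤ x) :
    fB x y f' v = f' (v - y) := by
  simp only [fB]; rw [if_neg (by omega), if_pos h2]

lemma fB_eval3 {x y v : ℕ} (f' : ℕ → ℤ) (hyx : y ≤ x) (h : x < v) :
    fB x y f' v = f' (v - 2 * y) + 2 := by
  simp only [fB]; rw [if_neg (by omega), if_neg (by omega)]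

lemma fB_rules {x y : ℕ} {f' : ℕ → ℤ} (hy : 0 < y) (h2 : 2 * y < x)
    (ht' : TopRule [x - 2 * y, y] f') (hb' : BotRule [x - y] f') :
    TopRule [x, y] (fB x y f') ∧ BotRule [x + y] (fB x y f') := by
  constructor
  · intro u v hbp hlt
    rw [blockPair_two] at hbp
    rcases hbp with ⟨hu, hv, hs, hne⟩ | ⟨hu, hv, hs, hne⟩
    · by_cases huy : u ≤ y
      · rw [fB_eval1 f' huy, fB_eval2 f' (by omega) (by omega)]
        have harg : v - y = x - y + 1 - u := by omega
        rw [harg]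
      · have huv : 2 * u ≤ x := by omega
        rw [fB_eval2 f' (by omega) (by omega), fB_eval2 f' (by omega) (by omega)]
        exact ht' (u - y) (v - y)
          (blockPair_two.mpr (Or.inl ⟨by omega, by omega, by omega, by omega⟩)) (by omega)
    · rw [fB_eval3 f' (by omega) hu, fB_eval3 f' (by omega) hv]
      have := ht' (u - 2 * y) (v - 2 * y)
        (blockPair_two.mpr (Or.inr ⟨by omega, by omega, by omega, by omega⟩)) (by omega)
      omega
  · intro u v hbp hlt
    rw [blockPair_one] at hbp
    obtain ⟨hu, hv, hs, hne⟩ := hbp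
    by_cases huy : u ≤ y
    · rw [fB_eval1 f' huy, fB_eval3 f' (by omega) (by omega)]
      have harg : v - 2 * y = x - y + 1 - u := by omega
      rw [harg]; ring
    · have hux : u ≤ x := by omega
      rw [fB_eval2 f' (by omega) hux, fB_eval2 f' (by omega) (by omega)]
      have := hb' (u - y) (v - y)
        (blockPair_one.mpr ⟨by omega, by omega, by omega, by omega⟩) (by omega)
      omega



/-- Step-A connectivity transfer (case `y < x < 2y`). -/
lemma stepA_conn {x y : ℕ} (hy : 0 < y) (h1 : y < x) (h2 : x < 2 * y)
    (conn' : ∀ i j, 0 < i → i ≤ y → 0 < j → j ≤ y →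
      (meander [2 * y - x, x - y] [y]).Reachable i j) :
    ∀ i j, 0 < i → i ≤ x + y → 0 < j → j ≤ x + y →
      (meander [x, y] [x + y]).Reachable i j := by
  have adj1 : ∀ u v, 0 < u → 0 < v → u + v = x + 1 → u ≠ v →
      (meander [x, y] [x + y]).Adj u v :=
    fun u v p1 p2 p3 p4 => Or.inl (blockPair_two.mpr (Or.inl ⟨p1, p2, p3, p4⟩))
  have adj2 : ∀ u v, x < u → x < v → u + v = 2 * x + y + 1 → u ≠ v →
      (meander [x, y] [x + y]).Adj u v :=
    fun u v p1 p2 p3 p4 => Or.inl (blockPair_two.mpr (Or.inr ⟨p1, p2, p3, p4⟩))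
  have adjb : ∀ u v, 0 < u → 0 < v → u + v = x + y + 1 → u ≠ v →
      (meander [x, y] [x + y]).Adj u v :=
    fun u v p1 p2 p3 p4 => Or.inr (blockPair_one.mpr ⟨p1, p2, p3, p4⟩)
  have hedge : ∀ p q, (meander [2 * y - x, x - y] [y]).Adj p q →
      (meander [x, y] [x + y]).Reachable (p + x) (q + x) := by
    intro p q h
    have h' : blockPair [2 * y - x, x - y] p q ∨ blockPair [y] p q := h
    rcases h' with hbp | hbp
    · rw [blockPair_two] at hbp
      rcases hbp with ⟨hu, hv, hs, hne⟩ | ⟨hu, hv, hs, hne⟩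
      · -- T1' arc: p + q = (2y - x) + 1; 3-step simulation
        exact ((adjb (p + x) (y + 1 - p) (by omega) (by omega) (by omega) (by omega)).reachable).trans
          (((adj1 (y + 1 - p) (x - y + p) (by omega) (by omega) (by omega) (by omega)).reachable).trans
            ((adjb (x - y + p) (q + x) (by omega) (by omega) (by omega) (by omega)).reachable))
      · -- T2' arc: p, q > 2y - x, p + q = 2(2y-x) + (x-y) + 1; 5-step simulation
        exact ((adjb (p + x) (y + 1 - p) (by omega) (by omega) (by omega) (by omega)).reachable).trans
          (((adj1 (y + 1 - p) (x - y + p) (by omega) (by omega) (by omega) (by omega)).reachable).trans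
            (((adjb (x - y + p) (2 * y + 1 - p) (by omega) (by omega) (by omega) (by omega)).reachable).trans
              (((adj1 (2 * y + 1 - p) (p + x - 2 * y) (by omega) (by omega) (by omega) (by omega)).reachable).trans
                ((adjb (p + x - 2 * y) (q + x) (by omega) (by omega) (by omega) (by omega)).reachable))))
    · -- B' arc: p + q = y + 1; single top arc in second block
      rw [blockPair_one] at hbp
      obtain ⟨hu, hv, hs, hne⟩ := hbp
      exact (adj2 (p + x) (q + x) (by omega) (by omega) (by omega) (by omega)).reachable
  have hproj : ∀ v, 0 < v → v ≤ x + y →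
      ∃ p, 0 < p ∧ p ≤ y ∧ (meander [x, y] [x + y]).Reachable v (p + x) := by
    intro v hv1 hv2
    rcases le_or_gt v y with hvy | hvy
    · exact ⟨y + 1 - v, by omega, by omega,
        (adjb v (y + 1 - v + x) (by omega) (by omega) (by omega) (by omega)).reachable⟩
    · rcases le_or_gt v x with hvx | hvx
      · refine ⟨v + y - x, by omega, by omega, ?_⟩
        exact ((adj1 v (x + 1 - v) (by omega) (by omega) (by omega) (by omega)).reachable).trans
          ((adjb (x + 1 - v) (v + y - x + x) (by omega) (by omega) (by omega) (by omega)).reachable)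
      · refine ⟨v - x, by omega, by omega, ?_⟩
        have e : v - x + x = v := by omega
        rw [e]
    -- done
  intro i j hi1 hi2 hj1 hj2
  obtain ⟨p, hp1, hp2, hpi⟩ := hproj i hi1 hi2
  obtain ⟨q, hq1, hq2, hqj⟩ := hproj j hj1 hj2
  have hmid := reachable_map' (fun v => v + x) hedge
    (conn' p q hp1 hp2 hq1 hq2) rfl rfl
  exact (hpi.trans hmid).trans hqj.symm

/-- Step-B connectivity transfer (case `x > 2y`). -/
lemma stepB_conn {x y : ℕ} (hy : 0 < y) (h2 : 2 * y < x)
    (conn' : ∀ i j, 0 < i → i ≤ x - y → 0 < j → j ≤ x - y →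
      (meander [x - 2 * y, y] [x - y]).Reachable i j) :
    ∀ i j, 0 < i → i ≤ x + y → 0 < j → j ≤ x + y →
      (meander [x, y] [x + y]).Reachable i j := by
  have adj1 : ∀ u v, 0 < u → 0 < v → u + v = x + 1 → u ≠ v →
      (meander [x, y] [x + y]).Adj u v :=
    fun u v p1 p2 p3 p4 => Or.inl (blockPair_two.mpr (Or.inl ⟨p1, p2, p3, p4⟩))
  have adj2 : ∀ u v, x < u → x < v → u + v = 2 * x + y + 1 → u ≠ v →
      (meander [x, y] [x + y]).Adj u v :=
    fun u v p1 p2 p3 p4 => Or.inl (blockPair_two.mpr (Or.inr ⟨p1, p2, p3, p4⟩))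
  have adjb : ∀ u v, 0 < u → 0 < v → u + v = x + y + 1 → u ≠ v →
      (meander [x, y] [x + y]).Adj u v :=
    fun u v p1 p2 p3 p4 => Or.inr (blockPair_one.mpr ⟨p1, p2, p3, p4⟩)
  have hedge : ∀ p q, (meander [x - 2 * y, y] [x - y]).Adj p q →
      (meander [x, y] [x + y]).Reachable (p + y) (q + y) := by
    intro p q h
    have h' : blockPair [x - 2 * y, y] p q ∨ blockPair [x - y] p q := h
    rcases h' with hbp | hbp
    · rw [blockPair_two] at hbp
      rcases hbp with ⟨hu, hv, hs, hne⟩ | ⟨hu, hv, hs, hne⟩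
      · -- T1' arc: single top arc in first block
        exact (adj1 (p + y) (q + y) (by omega) (by omega) (by omega) (by omega)).reachable
      · -- T2' arc: 5-step simulation
        exact ((adj1 (p + y) (x - y + 1 - p) (by omega) (by omega) (by omega) (by omega)).reachable).trans
          (((adjb (x - y + 1 - p) (2 * y + p) (by omega) (by omega) (by omega) (by omega)).reachable).trans
            (((adj2 (2 * y + p) (2 * x - y + 1 - p) (by omega) (by omega) (by omega) (by omega)).reachable).trans
              (((adjb (2 * x - y + 1 - p) (p + 2 * y - x) (by omega) (by omega) (by omega) (by omega)).reachable).trans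
                ((adj1 (p + 2 * y - x) (q + y) (by omega) (by omega) (by omega) (by omega)).reachable))))
    · -- B' arc: single bottom arc
      rw [blockPair_one] at hbp
      obtain ⟨hu, hv, hs, hne⟩ := hbp
      exact (adjb (p + y) (q + y) (by omega) (by omega) (by omega) (by omega)).reachable
  have hproj : ∀ v, 0 < v → v ≤ x + y →
      ∃ p, 0 < p ∧ p ≤ x - y ∧ (meander [x, y] [x + y]).Reachable v (p + y) := by
    intro v hv1 hv2
    rcases le_or_gt v y with hvy | hvy
    · exact ⟨x - y + 1 - v, by omega, by omega,
        (adj1 v (x - y + 1 - v + y) (by omega) (by omega) (by omega) (by omega)).reachable⟩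
    · rcases le_or_gt v x with hvx | hvx
      · refine ⟨v - y, by omega, by omega, ?_⟩
        have e : v - y + y = v := by omega
        rw [e]
      · refine ⟨v - 2 * y, by omega, by omega, ?_⟩
        exact ((adjb v (x + y + 1 - v) (by omega) (by omega) (by omega) (by omega)).reachable).trans
          ((adj1 (x + y + 1 - v) (v - 2 * y + y) (by omega) (by omega) (by omega) (by omega)).reachable)
  intro i j hi1 hi2 hj1 hj2
  obtain ⟨p, hp1, hp2, hpi⟩ := hproj i hi1 hi2
  obtain ⟨q, hq1, hq2, hqj⟩ := hproj j hj1 hj2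
  have hmid := reachable_map' (fun v => v + y) hedge
    (conn' p q hp1 hp2 hq1 hq2) rfl rfl
  exact (hpi.trans hmid).trans hqj.symm

lemma mirror_rules {x y : ℕ} {f' : ℕ → ℤ}
    (ht' : TopRule [y, x] f') (hb' : BotRule [y + x] f') :
    TopRule [x, y] (fun v => -f' (x + y + 1 - v)) ∧
    BotRule [x + y] (fun v => -f' (x + y + 1 - v)) := by
  constructor
  · intro u v hbp hlt
    rw [blockPair_two] at hbp
    show -f' (x + y + 1 - u) = -f' (x + y + 1 - v) + 1
    rcases hbp with ⟨hu, hv, hs, hne⟩ | ⟨hu, hv, hs, hne⟩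
    · have := ht' (x + y + 1 - v) (x + y + 1 - u)
        (blockPair_two.mpr (Or.inr ⟨by omega, by omega, by omega, by omega⟩)) (by omega)
      omega
    · have := ht' (x + y + 1 - v) (x + y + 1 - u)
        (blockPair_two.mpr (Or.inl ⟨by omega, by omega, by omega, by omega⟩)) (by omega)
      omega
  · intro u v hbp hlt
    rw [blockPair_one] at hbp
    obtain ⟨hu, hv, hs, hne⟩ := hbp
    show -f' (x + y + 1 - v) = -f' (x + y + 1 - u) + 1
    have e1 : x + y + 1 - v = u := by omega
    have e2 : x + y + 1 - u = v := by omega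
    rw [e1, e2]
    have := hb' u v (blockPair_one.mpr ⟨hu, hv, by omega, hne⟩) hlt
    omega

lemma mirror_conn {x y : ℕ}
    (conn' : ∀ i j, 0 < i → i ≤ y + x → 0 < j → j ≤ y + x →
      (meander [y, x] [y + x]).Reachable i j) :
    ∀ i j, 0 < i → i ≤ x + y → 0 < j → j ≤ x + y →
      (meander [x, y] [x + y]).Reachable i j := by
  have hadj : ∀ u v, (meander [y, x] [y + x]).Adj u v →
      (meander [x, y] [x + y]).Reachable (x + y + 1 - u) (x + y + 1 - v) := by
    intro u v h
    have h' : blockPair [y, x] u v ∨ blockPair [y + x] u v := h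
    apply SimpleGraph.Adj.reachable
    rcases h' with hbp | hbp
    · rw [blockPair_two] at hbp
      rcases hbp with ⟨hu, hv, hs, hne⟩ | ⟨hu, hv, hs, hne⟩
      · exact Or.inl (blockPair_two.mpr (Or.inr ⟨by omega, by omega, by omega, by omega⟩))
      · exact Or.inl (blockPair_two.mpr (Or.inl ⟨by omega, by omega, by omega, by omega⟩))
    · rw [blockPair_one] at hbp
      obtain ⟨hu, hv, hs, hne⟩ := hbp
      exact Or.inr (blockPair_one.mpr ⟨by omega, by omega, by omega, by omega⟩)
  intro i j hi1 hi2 hj1 hj2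
  refine reachable_map' (fun v => x + y + 1 - v)
    (fun u v h => hadj u v h)
    (conn' (x + y + 1 - i) (x + y + 1 - j) (by omega) (by omega) (by omega) (by omega))
    ?_ ?_
  · show x + y + 1 - (x + y + 1 - i) = i; omega
  · show x + y + 1 - (x + y + 1 - j) = j; omega

lemma gcd_sub {a b : ℕ} (h : b ≤ a) : Nat.gcd (a - b) b = Nat.gcd a b := by
  conv_rhs => rw [show a = (a - b) + b by omega]
  rw [Nat.gcd_add_self_left]

/-- Master lemma: every coprime meander `M(x, y | x + y)` admits a potential and
is connected on `1, …, x + y`. -/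
lemma master : ∀ n x y : ℕ, 2 * (x + y) + (if x < y then 1 else 0) ≤ n →
    0 < x → 0 < y → Nat.gcd x y = 1 →
    (∃ f : ℕ → ℤ, TopRule [x, y] f ∧ BotRule [x + y] f) ∧
    (∀ i j, 0 < i → i ≤ x + y → 0 < j → j ≤ x + y →
      (meander [x, y] [x + y]).Reachable i j) := by
  intro n
  induction n with
  | zero =>
    intro x y hn hx hy _
    have h' : 2 * (x + y) ≤ 0 := le_trans (Nat.le_add_right _ _) hn
    omega
  | succ n ih =>
    intro x y hn hx hy hg
    rcases lt_trichotomy x y with hxy | hxy | hxy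
    · -- x < y : mirror
      rw [if_pos hxy] at hn
      obtain ⟨⟨f', ht', hb'⟩, conn'⟩ :=
        ih y x (by rw [if_neg (by omega)]; omega) hy hx (by rwa [Nat.gcd_comm])
      exact ⟨⟨_, (mirror_rules ht' hb').1, (mirror_rules ht' hb').2⟩, mirror_conn conn'⟩
    · -- x = y : forces x = y = 1
      subst hxy
      rw [Nat.gcd_self] at hg
      subst hg
      constructor
      · refine ⟨fun v => (v : ℤ), ?_, ?_⟩
        · intro u v hbp hlt
          show (u : ℤ) = (v : ℤ) + 1
          rw [blockPair_two] at hbp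
          rcases hbp with ⟨hu, hv, hs, hne⟩ | ⟨hu, hv, hs, hne⟩ <;> omega
        · intro u v hbp hlt
          show (v : ℤ) = (u : ℤ) + 1
          rw [blockPair_one] at hbp
          obtain ⟨hu, hv, hs, hne⟩ := hbp
          omega
      · have hadj : (meander [1, 1] [1 + 1]).Adj 1 2 :=
          Or.inr (blockPair_one.mpr ⟨by norm_num, by norm_num, by norm_num, by norm_num⟩)
        intro i j hi1 hi2 hj1 hj2
        interval_cases i <;> interval_cases j
        · exact SimpleGraph.Reachable.refl _
        · exact hadj.reachable
        · exact hadj.reachable.symm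
        · exact SimpleGraph.Reachable.refl _
    · -- x > y
      rw [if_neg (by omega)] at hn
      rcases lt_trichotomy x (2 * y) with h2 | h2 | h2
      · -- case A
        have hg' : Nat.gcd (2 * y - x) (x - y) = 1 := by
          rw [show 2 * y - x = y - (x - y) by omega, gcd_sub (by omega), Nat.gcd_comm,
            gcd_sub (by omega)]
          exact hg
        have hmeas : 2 * (2 * y - x + (x - y)) + (if 2 * y - x < x - y then 1 else 0) ≤ n := by
          have hite : (if 2 * y - x < x - y then 1 else 0) ≤ 1 := by split <;> omega
          omega
        obtain ⟨⟨f', ht', hb'⟩, conn'⟩ := ih (2 * y - x) (x - y) hmeas (by omega) (by omega) hg'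
        have e : 2 * y - x + (x - y) = y := by omega
        rw [e] at hb' conn'
        exact ⟨⟨fA x y f', (fA_rules hy hxy h2 ht' hb').1, (fA_rules hy hxy h2 ht' hb').2⟩,
          stepA_conn hy hxy h2 conn'⟩
      · -- x = 2y forces y = 1, x = 2
        have hy1 : y = 1 := by
          have h3 : Nat.gcd y x = y := Nat.gcd_eq_left ⟨2, by omega⟩
          rw [Nat.gcd_comm] at hg
          omega
        subst hy1
        have hx2 : x = 2 := by omega
        subst hx2
        constructor
        · refine ⟨fun v => if v = 2 then (-1 : ℤ) else if v = 3 then 1 else 0, ?_, ?_⟩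
          · intro u v hbp hlt
            rw [blockPair_two] at hbp
            rcases hbp with ⟨hu, hv, hs, hne⟩ | ⟨hu, hv, hs, hne⟩
            · have hu1 : u = 1 := by omega
              have hv2 : v = 2 := by omega
              subst hu1; subst hv2; norm_num
            · omega
          · intro u v hbp hlt
            rw [blockPair_one] at hbp
            obtain ⟨hu, hv, hs, hne⟩ := hbp
            have hu1 : u = 1 := by omega
            have hv3 : v = 3 := by omega
            subst hu1; subst hv3; norm_num
        · have hadj12 : (meander [2, 1] [2 + 1]).Adj 1 2 :=
            Or.inl (blockPair_two.mpr (Or.inl ⟨by norm_num, by norm_num, by norm_num, by norm_num⟩))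
          have hadj13 : (meander [2, 1] [2 + 1]).Adj 1 3 :=
            Or.inr (blockPair_one.mpr ⟨by norm_num, by norm_num, by norm_num, by norm_num⟩)
          have hr : ∀ v, 0 < v → v ≤ 2 + 1 → (meander [2, 1] [2 + 1]).Reachable 1 v := by
            intro v hv1 hv2
            interval_cases v
            · exact SimpleGraph.Reachable.refl _
            · exact hadj12.reachable
            · exact hadj13.reachable
          intro i j hi1 hi2 hj1 hj2
          exact (hr i hi1 hi2).symm.trans (hr j hj1 hj2)
      · -- case B
        have hg' : Nat.gcd (x - 2 * y) y = 1 := by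
          rw [show x - 2 * y = x - y - y by omega, gcd_sub (by omega), gcd_sub (by omega)]
          exact hg
        have hmeas : 2 * (x - 2 * y + y) + (if x - 2 * y < y then 1 else 0) ≤ n := by
          have hite : (if x - 2 * y < y then 1 else 0) ≤ 1 := by split <;> omega
          omega
        obtain ⟨⟨f', ht', hb'⟩, conn'⟩ := ih (x - 2 * y) y hmeas (by omega) hy hg'
        have e : x - 2 * y + y = x - y := by omega
        rw [e] at hb' conn'
        exact ⟨⟨fB x y f', (fB_rules hy h2 ht' hb').1, (fB_rules hy h2 ht' hb').2⟩,
          stepB_conn hy h2 conn'⟩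

/-- For coprime positive `k1 > k2`, the bottom-right block (rows and columns
`k1 + k2 + 1, …, 2 k1 + k2`) of the spectrum matrix of `p^A(k1 + k2 | k1 / 2 k1 + k2)`
consists of the same multiset of values as the extended spectrum matrix of
`p^A(k1 - k2 | k2 / k1)`. -/
theorem statement4 (k1 k2 : ℕ) (hk1 : 0 < k1) (hk2 : 0 < k2) (hlt : k2 < k1)
    (hgcd : Nat.gcd k1 k2 = 1) :
    spectrumBlock [k1 + k2, k1] [2 * k1 + k2]
        (Finset.Icc (k1 + k2 + 1) (2 * k1 + k2)) (Finset.Icc (k1 + k2 + 1) (2 * k1 + k2))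
      = extendedValues [k1 - k2, k2] [k1] := by
  classical
  -- coprimality facts
  have hgx : Nat.gcd (k1 + k2) k1 = 1 := by
    rw [show k1 + k2 = k2 + k1 by omega, Nat.gcd_add_self_left, Nat.gcd_comm]
    exact hgcd
  have hg2 : Nat.gcd (k1 - k2) k2 = 1 := by
    rw [gcd_sub (by omega)]
    exact hgcd
  -- reduced meander: potential and connectivity
  obtain ⟨⟨f2, ht2, hb2⟩, conn2⟩ :=
    master (2 * ((k1 - k2) + k2) + 1) (k1 - k2) k2 (by split <;> omega) (by omega) hk2 hg2
  have e2 : k1 - k2 + k2 = k1 := by omega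
  rw [e2] at hb2 conn2
  -- big meander connectivity
  have conn1 := (master (2 * ((k1 + k2) + k1) + 1) (k1 + k2) k1 (by split <;> omega)
    (by omega) hk1 hgx).2
  have e1 : k1 + k2 + k1 = 2 * k1 + k2 := by omega
  rw [e1] at conn1
  -- the step-A potential on the big meander
  have ht2' : TopRule [2 * k1 - (k1 + k2), k1 + k2 - k1] f2 := by
    rw [show 2 * k1 - (k1 + k2) = k1 - k2 by omega, show k1 + k2 - k1 = k2 by omega]
    exact ht2
  have hrules := fA_rules (x := k1 + k2) (y := k1) hk1 (by omega) (by omega) ht2' hb2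
  have ht1 : TopRule [k1 + k2, k1] (fA (k1 + k2) k1 f2) := hrules.1
  have hb1 : BotRule [2 * k1 + k2] (fA (k1 + k2) k1 f2) := by
    have h := hrules.2
    rwa [e1] at h
  -- pathWeight values
  have hpw1 : ∀ v w, 0 < v → v ≤ k1 → 0 < w → w ≤ k1 →
      pathWeight [k1 + k2, k1] [2 * k1 + k2] (v + (k1 + k2)) (w + (k1 + k2))
        = f2 v - f2 w := by
    intro v w hv1 hv2 hw1 hw2
    rw [pathWeight_eq ht1 hb1
      (conn1 (v + (k1 + k2)) (w + (k1 + k2)) (by omega) (by omega) (by omega) (by omega))]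
    rw [fA_eval3 f2 (by omega) (by omega), fA_eval3 f2 (by omega) (by omega)]
    rw [show w + (k1 + k2) - (k1 + k2) = w by omega,
      show v + (k1 + k2) - (k1 + k2) = v by omega]
    ring
  have hpw2 : ∀ v w, 0 < v → v ≤ k1 → 0 < w → w ≤ k1 →
      pathWeight [k1 - k2, k2] [k1] v w = f2 w - f2 v := fun v w hv1 hv2 hw1 hw2 =>
    pathWeight_eq ht2 hb2 (conn2 v w hv1 hv2 hw1 hw2)
  -- multiset bookkeeping
  have hsum : ([k1 - k2, k2] : List ℕ).sum = k1 := by simp; omega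
  have hfilter : ((Finset.Icc (k1 + k2 + 1) (2 * k1 + k2) ×ˢ
        Finset.Icc (k1 + k2 + 1) (2 * k1 + k2)).filter
        fun p => seaweedPos [k1 + k2, k1] [2 * k1 + k2] p.1 p.2)
      = Finset.Icc (k1 + k2 + 1) (2 * k1 + k2) ×ˢ Finset.Icc (k1 + k2 + 1) (2 * k1 + k2) := by
    apply Finset.filter_true_of_mem
    rintro ⟨i, j⟩ hm
    rw [Finset.mem_product, Finset.mem_Icc, Finset.mem_Icc] at hm
    obtain ⟨⟨h1, h2⟩, h3, h4⟩ := hm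
    rcases le_total j i with h | h
    · exact Or.inl ⟨h, sameBlock_two.mpr (Or.inr ⟨by omega, by omega, by omega, by omega⟩)⟩
    · exact Or.inr ⟨h, sameBlock_one.mpr ⟨by omega, by omega, by omega, by omega⟩⟩
  have hmap : Finset.Icc (k1 + k2 + 1) (2 * k1 + k2) ×ˢ Finset.Icc (k1 + k2 + 1) (2 * k1 + k2)
      = (Finset.Icc 1 k1 ×ˢ Finset.Icc 1 k1).map
        ⟨fun p => (p.2 + (k1 + k2), p.1 + (k1 + k2)), by
          rintro ⟨a1, a2⟩ ⟨b1, b2⟩ hab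
          simp only [Prod.mk.injEq] at hab ⊢
          omega⟩ := by
    ext ⟨i, j⟩
    simp only [Finset.mem_product, Finset.mem_Icc, Finset.mem_map,
      Function.Embedding.coeFn_mk, Prod.exists, Prod.mk.injEq]
    constructor
    · rintro ⟨⟨h1, h2⟩, h3, h4⟩
      exact ⟨j - (k1 + k2), i - (k1 + k2),
        ⟨⟨by omega, by omega⟩, by omega, by omega⟩, Prod.ext (show i - (k1 + k2) + (k1 + k2) = i by omega)
          (show j - (k1 + k2) + (k1 + k2) = j by omega)⟩
    · rintro ⟨a, b, ⟨⟨ha1, ha2⟩, hb1, hb2⟩, hi, hj⟩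
      omega
  unfold spectrumBlock extendedValues
  rw [hsum, hfilter, hmap, Finset.map_val, Multiset.map_map]
  apply Multiset.map_congr rfl
  rintro ⟨v, w⟩ hp
  rw [Finset.mem_val, Finset.mem_product, Finset.mem_Icc, Finset.mem_Icc] at hp
  obtain ⟨⟨hv1, hv2⟩, hw1, hw2⟩ := hp
  show pathWeight [k1 + k2, k1] [2 * k1 + k2] (w + (k1 + k2)) (v + (k1 + k2))
    = pathWeight [k1 - k2, k2] [k1] v w
  rw [hpw1 w v hw1 hw2 hv1 hv2, hpw2 v w hv1 hv2 hw1 hw2]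

end Seaweed
end

section
/- For every integer k ≥ 1, let g_k = p^A(2k|1|1 / 2k+2), a Frobenius type-A seaweed. Then the spectrum of g_k is the multiset {−k, k+1} ∪ ⋃_{i=1}^{k} { (−k+i) with multiplicity 4i, (k−i+1) with multiplicity 4i }. Moreover, g_k has the log-concave spectrum property. -/
namespace Seaweed

section Work
variable (k : ℕ)

/-- potential function -/
def phi (k : ℕ) (i : ℕ) : ℤ := if i ≤ k then 1 - (i : ℤ) else (i : ℤ) - (2 * k + 1)

lemma blockPair_top (hk : 1 ≤ k) (x y : ℕ) :
    blockPair [2 * k, 1, 1] x y ↔ 1 ≤ x ∧ 1 ≤ y ∧ x + y = 2 * k + 1 := by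
  constructor
  · rintro ⟨m, hm, hx, hy, hsum, hne⟩
    simp only [List.length] at hm
    interval_cases m <;> simp_all [List.take, List.getD] <;> omega
  · rintro ⟨hx, hy, hs⟩
    refine ⟨0, by simp, by simp; omega, by simp; omega, by simp; omega, by omega⟩

lemma blockPair_bot (x y : ℕ) :
    blockPair [2 * k + 2] x y ↔ 1 ≤ x ∧ 1 ≤ y ∧ x + y = 2 * k + 3 := by
  constructor
  · rintro ⟨m, hm, hx, hy, hsum, hne⟩
    simp only [List.length] at hm
    interval_cases m <;> simp_all [List.take, List.getD] <;> omega
  · rintro ⟨hx, hy, hs⟩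
    refine ⟨0, by simp, by simp; omega, by simp; omega, by simp; omega, by omega⟩

lemma adj_iff (hk : 1 ≤ k) (x y : ℕ) :
    (meander [2 * k, 1, 1] [2 * k + 2]).Adj x y ↔
      1 ≤ x ∧ 1 ≤ y ∧ (x + y = 2 * k + 1 ∨ x + y = 2 * k + 3) := by
  simp only [meander, blockPair_top k hk, blockPair_bot k]
  tauto


open scoped Classical in
lemma step_eq (hk : 1 ≤ k) (x y : ℕ)
    (h : (meander [2 * k, 1, 1] [2 * k + 2]).Adj x y) :
    (if dirEdge [2 * k, 1, 1] [2 * k + 2] x y then (1 : ℤ) else -1) = phi k y - phi k x := by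
  rw [adj_iff k hk] at h
  obtain ⟨hx, hy, hs⟩ := h
  have hd : dirEdge [2 * k, 1, 1] [2 * k + 2] x y ↔
      (x + y = 2 * k + 1 ∧ y < x) ∨ (x + y = 2 * k + 3 ∧ x < y) := by
    simp only [dirEdge, blockPair_top k hk, blockPair_bot k]
    constructor
    · rintro (⟨⟨_, _, h1⟩, h2⟩ | ⟨⟨_, _, h1⟩, h2⟩)
      · exact Or.inl ⟨h1, h2⟩
      · exact Or.inr ⟨h1, h2⟩
    · rintro (⟨h1, h2⟩ | ⟨h1, h2⟩)
      · exact Or.inl ⟨⟨hx, hy, h1⟩, h2⟩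
      · exact Or.inr ⟨⟨hx, hy, h1⟩, h2⟩
  rw [hd]
  simp only [phi]
  split_ifs <;> push_cast <;> omega
open scoped Classical in
lemma walkWeight_eq (hk : 1 ≤ k) {i j : ℕ}
    (w : (meander [2 * k, 1, 1] [2 * k + 2]).Walk i j) :
    walkWeight [2 * k, 1, 1] [2 * k + 2] w = phi k j - phi k i := by
  induction w with
  | nil => simp [walkWeight]
  | cons h p ih =>
      rename_i u v _
      simp only [walkWeight, SimpleGraph.Walk.darts_cons, List.map_cons, List.sum_cons]
      have := step_eq k hk u v h
      simp only [walkWeight] at ih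
      rw [this, ih]
      ring
lemma reach_sub2 (hk : 1 ≤ k) (i : ℕ) (h3 : 3 ≤ i) (h : i ≤ 2 * k + 2) :
    (meander [2 * k, 1, 1] [2 * k + 2]).Reachable i (i - 2) := by
  have a1 : (meander [2 * k, 1, 1] [2 * k + 2]).Adj i (2 * k + 3 - i) := by
    rw [adj_iff k hk]; omega
  have a2 : (meander [2 * k, 1, 1] [2 * k + 2]).Adj (2 * k + 3 - i) (i - 2) := by
    rw [adj_iff k hk]; omega
  exact a1.reachable.trans a2.reachable

lemma reach_odd (hk : 1 ≤ k) : ∀ m, 2 * m + 1 ≤ 2 * k + 2 →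
    (meander [2 * k, 1, 1] [2 * k + 2]).Reachable (2 * m + 1) 1 := by
  intro m
  induction m with
  | zero => intro _; rfl
  | succ n ih =>
      intro h
      have h1 := reach_sub2 k hk (2 * (n + 1) + 1) (by omega) (by omega)
      have : 2 * (n + 1) + 1 - 2 = 2 * n + 1 := by omega
      rw [this] at h1
      exact h1.trans (ih (by omega))

lemma reach_even (hk : 1 ≤ k) : ∀ m, 2 * m + 2 ≤ 2 * k + 2 →
    (meander [2 * k, 1, 1] [2 * k + 2]).Reachable (2 * m + 2) 2 := by
  intro m
  induction m with
  | zero => intro _; rfl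
  | succ n ih =>
      intro h
      have h1 := reach_sub2 k hk (2 * (n + 1) + 2) (by omega) (by omega)
      have : 2 * (n + 1) + 2 - 2 = 2 * n + 2 := by omega
      rw [this] at h1
      exact h1.trans (ih (by omega))

lemma reach_one (hk : 1 ≤ k) (i : ℕ) (h1 : 1 ≤ i) (h2 : i ≤ 2 * k + 2) :
    (meander [2 * k, 1, 1] [2 * k + 2]).Reachable i 1 := by
  have r21 : (meander [2 * k, 1, 1] [2 * k + 2]).Reachable 2 1 := by
    have a : (meander [2 * k, 1, 1] [2 * k + 2]).Adj 2 (2 * (k - 1) + 1) := by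
      rw [adj_iff k hk]; omega
    exact a.reachable.trans (reach_odd k hk (k - 1) (by omega))
  rcases Nat.even_or_odd i with ⟨m, hm⟩ | ⟨m, hm⟩
  · have : i = 2 * (m - 1) + 2 := by omega
    rw [this]
    exact (reach_even k hk (m - 1) (by omega)).trans r21
  · have : i = 2 * m + 1 := by omega
    rw [this]
    exact reach_odd k hk m (by omega)

open scoped Classical in
lemma pathWeight_eq_s15 (hk : 1 ≤ k) (i j : ℕ) (hi1 : 1 ≤ i) (hi2 : i ≤ 2 * k + 2)
    (hj1 : 1 ≤ j) (hj2 : j ≤ 2 * k + 2) :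
    pathWeight [2 * k, 1, 1] [2 * k + 2] i j = phi k j - phi k i := by
  have hr : (meander [2 * k, 1, 1] [2 * k + 2]).Reachable i j :=
    (reach_one k hk i hi1 hi2).trans (reach_one k hk j hj1 hj2).symm
  obtain ⟨w⟩ := hr
  have hex : ∃ p : (meander [2 * k, 1, 1] [2 * k + 2]).Walk i j, p.IsPath :=
    ⟨w.bypass, w.bypass_isPath⟩
  rw [pathWeight, dif_pos hex]
  exact walkWeight_eq k hk _
lemma card_Icc_filter_int (a b : ℕ) (ha : 1 ≤ a) (lo hi : ℤ) :
    ((Finset.Icc a b).filter (fun i : ℕ => lo ≤ (i : ℤ) ∧ (i : ℤ) ≤ hi)).card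
      = (min (b : ℤ) hi + 1 - max (a : ℤ) lo).toNat := by
  have h : (Finset.Icc a b).filter (fun i : ℕ => lo ≤ (i : ℤ) ∧ (i : ℤ) ≤ hi)
      = Finset.Icc (max a lo.toNat) (min b hi.toNat) := by
    ext i
    simp only [Finset.mem_filter, Finset.mem_Icc]
    omega
  rw [h, Nat.card_Icc]
  omega

lemma row_card (a : ℕ) (ha : 1 ≤ a) (c : ℤ) :
    ((Finset.Icc a (2 * k + 2)).filter (fun j => phi k j = c)).card
      = (min ((2 * k + 2 : ℕ) : ℤ) (min (1 - c) (k : ℤ)) + 1 - max (a : ℤ) (1 - c)).toNat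
      + (min ((2 * k + 2 : ℕ) : ℤ) (c + 2 * k + 1) + 1
          - max (a : ℤ) (max (c + 2 * k + 1) ((k : ℤ) + 1))).toNat := by
  have hcong : (Finset.Icc a (2 * k + 2)).filter (fun j => phi k j = c)
      = (Finset.Icc a (2 * k + 2)).filter
          (fun j : ℕ => (1 - c ≤ (j : ℤ) ∧ (j : ℤ) ≤ min (1 - c) (k : ℤ)) ∨
            (max (c + 2 * k + 1) ((k : ℤ) + 1) ≤ (j : ℤ) ∧ (j : ℤ) ≤ c + 2 * k + 1)) := by
    apply Finset.filter_congr
    intro j hj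
    simp only [Finset.mem_Icc] at hj
    simp only [phi]
    split_ifs with h <;> constructor <;> intro h2 <;> omega
  rw [hcong, Finset.filter_or, Finset.card_union_of_disjoint, card_Icc_filter_int _ _ ha,
    card_Icc_filter_int _ _ ha]
  rw [Finset.disjoint_left]
  intro x hx hx2
  simp only [Finset.mem_filter, Finset.mem_Icc] at hx hx2
  omega
lemma seaweedPos_iff (hk : 1 ≤ k) (i j : ℕ) (hi : 1 ≤ i) (hi2 : i ≤ 2 * k + 2)
    (hj : 1 ≤ j) (hj2 : j ≤ 2 * k + 2) :
    seaweedPos [2 * k, 1, 1] [2 * k + 2] i j ↔ (i ≤ j ∨ i ≤ 2 * k) := by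
  unfold seaweedPos sameBlock
  constructor
  · rintro (⟨hle, m, hm, h1, h2, h3, h4⟩ | ⟨hle, _⟩)
    · simp only [List.length] at hm
      interval_cases m <;> simp_all [List.take, List.getD] <;> omega
    · exact Or.inl hle
  · intro h
    by_cases hij : i ≤ j
    · exact Or.inr ⟨hij, 0, by simp, by simp; omega, by simp; omega,
        by simp; omega, by simp; omega⟩
    · refine Or.inl ⟨by omega, 0, by simp, by simp; omega, by simp; omega,
        by simp; omega, by simp; omega⟩

open scoped Classical in
lemma sb_eq (hk : 1 ≤ k) :
    spectrumBlock [2 * k, 1, 1] [2 * k + 2] (Finset.Icc 1 (2 * k + 2)) (Finset.Icc 1 (2 * k + 2))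
      = ((Finset.Icc 1 (2 * k + 2) ×ˢ Finset.Icc 1 (2 * k + 2)).filter
          (fun p => p.1 ≤ p.2 ∨ p.1 ≤ 2 * k)).val.map (fun p => phi k p.2 - phi k p.1) := by
  unfold spectrumBlock
  have h1 : (Finset.Icc 1 (2 * k + 2) ×ˢ Finset.Icc 1 (2 * k + 2)).filter
        (fun p => seaweedPos [2 * k, 1, 1] [2 * k + 2] p.1 p.2)
      = (Finset.Icc 1 (2 * k + 2) ×ˢ Finset.Icc 1 (2 * k + 2)).filter
        (fun p => p.1 ≤ p.2 ∨ p.1 ≤ 2 * k) := by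
    apply Finset.filter_congr
    intro p hp
    simp only [Finset.mem_product, Finset.mem_Icc] at hp
    exact seaweedPos_iff k hk p.1 p.2 hp.1.1 hp.1.2 hp.2.1 hp.2.2
  rw [h1]
  apply Multiset.map_congr rfl
  intro p hp
  rw [Finset.mem_val, Finset.mem_filter, Finset.mem_product, Finset.mem_Icc, Finset.mem_Icc] at hp
  exact pathWeight_eq_s15 k hk p.1 p.2 hp.1.1.1 hp.1.1.2 hp.1.2.1 hp.1.2.2
lemma rhs_count (hk : 1 ≤ k) (v : ℤ) :
    Multiset.count v (Multiset.replicate 1 (-(k : ℤ)) + Multiset.replicate 1 ((k : ℤ) + 1) +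
        ∑ i ∈ Finset.Icc 1 k,
          (Multiset.replicate (4 * i) ((i : ℤ) - k) +
            Multiset.replicate (4 * i) ((k : ℤ) - i + 1)))
      = (if v = -(k : ℤ) then 1 else 0) + (if v = (k : ℤ) + 1 then 1 else 0)
        + (if 1 ≤ v + k ∧ v + k ≤ k then (4 * (v + (k : ℤ))).toNat else 0)
        + (if 1 ≤ (k : ℤ) + 1 - v ∧ (k : ℤ) + 1 - v ≤ k then (4 * ((k : ℤ) + 1 - v)).toNat else 0) := by
  rw [Multiset.count_add, Multiset.count_add, Multiset.count_replicate, Multiset.count_replicate,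
    Multiset.count_sum']
  have hsum : ∑ i ∈ Finset.Icc 1 k,
      Multiset.count v (Multiset.replicate (4 * i) ((i : ℤ) - k) +
        Multiset.replicate (4 * i) ((k : ℤ) - i + 1))
      = (∑ i ∈ Finset.Icc 1 k, if (i : ℤ) - k = v then 4 * i else 0)
        + (∑ i ∈ Finset.Icc 1 k, if (k : ℤ) - i + 1 = v then 4 * i else 0) := by
    rw [← Finset.sum_add_distrib]
    refine Finset.sum_congr rfl fun i _ => ?_
    rw [Multiset.count_add, Multiset.count_replicate, Multiset.count_replicate]
  rw [hsum]
  have hS1 : (∑ i ∈ Finset.Icc 1 k, if (i : ℤ) - k = v then 4 * i else 0)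
      = (if 1 ≤ v + k ∧ v + k ≤ k then (4 * (v + (k : ℤ))).toNat else 0) := by
    by_cases hc : 1 ≤ v + k ∧ v + k ≤ k
    · have h1 : ∀ i ∈ Finset.Icc 1 k, (if (i : ℤ) - k = v then 4 * i else 0)
          = if i = (v + k).toNat then 4 * i else 0 := by
        intro i hi
        simp only [Finset.mem_Icc] at hi
        by_cases h : (i : ℤ) - k = v
        · rw [if_pos h, if_pos (by omega)]
        · rw [if_neg h, if_neg (by omega)]
      rw [Finset.sum_congr rfl h1, Finset.sum_ite_eq' (Finset.Icc 1 k) ((v + k).toNat)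
        (fun i => 4 * i), if_pos (by simp only [Finset.mem_Icc]; omega), if_pos hc]
      omega
    · rw [if_neg hc]
      refine Finset.sum_eq_zero fun i hi => ?_
      simp only [Finset.mem_Icc] at hi
      rw [if_neg (by omega)]
  have hS2 : (∑ i ∈ Finset.Icc 1 k, if (k : ℤ) - i + 1 = v then 4 * i else 0)
      = (if 1 ≤ (k : ℤ) + 1 - v ∧ (k : ℤ) + 1 - v ≤ k then (4 * ((k : ℤ) + 1 - v)).toNat else 0) := by
    by_cases hc : 1 ≤ (k : ℤ) + 1 - v ∧ (k : ℤ) + 1 - v ≤ k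
    · have h1 : ∀ i ∈ Finset.Icc 1 k, (if (k : ℤ) - i + 1 = v then 4 * i else 0)
          = if i = ((k : ℤ) + 1 - v).toNat then 4 * i else 0 := by
        intro i hi
        simp only [Finset.mem_Icc] at hi
        by_cases h : (k : ℤ) - i + 1 = v
        · rw [if_pos h, if_pos (by omega)]
        · rw [if_neg h, if_neg (by omega)]
      rw [Finset.sum_congr rfl h1, Finset.sum_ite_eq' (Finset.Icc 1 k) (((k : ℤ) + 1 - v).toNat)
        (fun i => 4 * i), if_pos (by simp only [Finset.mem_Icc]; omega), if_pos hc]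
      omega
    · rw [if_neg hc]
      refine Finset.sum_eq_zero fun i hi => ?_
      simp only [Finset.mem_Icc] at hi
      rw [if_neg (by omega)]
  rw [hS1, hS2]
  split_ifs <;> omega
lemma inner_card (hk : 1 ≤ k) (v : ℤ) (i : ℕ) (hi : 1 ≤ i) (hi2 : i ≤ 2 * k + 2) :
    ((Finset.Icc 1 (2 * k + 2)).filter
        (fun j => (i ≤ j ∨ i ≤ 2 * k) ∧ v = phi k j - phi k i)).card
      = (min ((2 * k + 2 : ℕ) : ℤ) (min (1 - (v + phi k i)) (k : ℤ)) + 1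
          - max (((if i ≤ 2 * k then 1 else i : ℕ)) : ℤ) (1 - (v + phi k i))).toNat
      + (min ((2 * k + 2 : ℕ) : ℤ) ((v + phi k i) + 2 * k + 1) + 1
          - max (((if i ≤ 2 * k then 1 else i : ℕ)) : ℤ)
              (max ((v + phi k i) + 2 * k + 1) ((k : ℤ) + 1))).toNat := by
  have htrans : (Finset.Icc 1 (2 * k + 2)).filter
        (fun j => (i ≤ j ∨ i ≤ 2 * k) ∧ v = phi k j - phi k i)
      = (Finset.Icc (if i ≤ 2 * k then 1 else i) (2 * k + 2)).filter
          (fun j => phi k j = v + phi k i) := by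
    ext j
    rw [Finset.mem_filter, Finset.mem_filter, Finset.mem_Icc, Finset.mem_Icc]
    by_cases h : i ≤ 2 * k
    · rw [if_pos h]; omega
    · rw [if_neg h]; omega
  rw [htrans, row_card k _ (by split_ifs <;> omega) _]

set_option maxHeartbeats 2000000 in
open scoped Classical in
lemma lhs_count (hk : 1 ≤ k) (v : ℤ) :
    Multiset.count v (((Finset.Icc 1 (2 * k + 2) ×ˢ Finset.Icc 1 (2 * k + 2)).filter
        (fun p => p.1 ≤ p.2 ∨ p.1 ≤ 2 * k)).val.map (fun p => phi k p.2 - phi k p.1))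
      = (min (k : ℤ) (v + k) + 1 - max 1 (v + 1)).toNat
        + (min (k : ℤ) (v + k + 1) + 1 - max 1 v).toNat
        + ((min (2 * (k : ℤ)) (2 * k + 1 - v) + 1 - max ((k : ℤ) + 1) ((k : ℤ) + 2 - v)).toNat
          + (min (2 * (k : ℤ)) (2 * k + 2 - v) + 1 - max ((k : ℤ) + 1) ((k : ℤ) + 1 - v)).toNat)
        + ((if 0 ≤ v ∧ v ≤ 1 then 1 else 0) + (if v = 0 then 1 else 0)) := by
  rw [Multiset.count_map]
  have h1 : Multiset.card (Multiset.filter (fun p => v = phi k p.2 - phi k p.1)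
        ((Finset.Icc 1 (2 * k + 2) ×ˢ Finset.Icc 1 (2 * k + 2)).filter
          (fun p => p.1 ≤ p.2 ∨ p.1 ≤ 2 * k)).val)
      = ((Finset.Icc 1 (2 * k + 2) ×ˢ Finset.Icc 1 (2 * k + 2)).filter
          (fun p => (p.1 ≤ p.2 ∨ p.1 ≤ 2 * k) ∧ v = phi k p.2 - phi k p.1)).card := by
    rw [← Finset.filter_val, Finset.filter_filter]
    rfl
  rw [h1, Finset.card_filter, Finset.sum_product]
  have h2 : ∀ i ∈ Finset.Icc 1 (2 * k + 2),
      (∑ j ∈ Finset.Icc 1 (2 * k + 2),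
        if (i ≤ j ∨ i ≤ 2 * k) ∧ v = phi k j - phi k i then 1 else 0)
      = ((Finset.Icc 1 (2 * k + 2)).filter
          (fun j => (i ≤ j ∨ i ≤ 2 * k) ∧ v = phi k j - phi k i)).card := by
    intro i _
    rw [Finset.card_filter]
  rw [Finset.sum_congr rfl h2]
  have hsplit : Finset.Icc 1 (2 * k + 2)
      = (Finset.Icc 1 k ∪ Finset.Icc (k + 1) (2 * k)) ∪ Finset.Icc (2 * k + 1) (2 * k + 2) := by
    ext i
    simp only [Finset.mem_union, Finset.mem_Icc]
    omega
  have hd1 : Disjoint (Finset.Icc 1 k) (Finset.Icc (k + 1) (2 * k)) := by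
    rw [Finset.disjoint_left]; intro x hx hx2
    simp only [Finset.mem_Icc] at hx hx2; omega
  have hd2 : Disjoint (Finset.Icc 1 k ∪ Finset.Icc (k + 1) (2 * k))
      (Finset.Icc (2 * k + 1) (2 * k + 2)) := by
    rw [Finset.disjoint_left]; intro x hx hx2
    simp only [Finset.mem_union, Finset.mem_Icc] at hx hx2; omega
  nth_rewrite 1 [hsplit]
  rw [Finset.sum_union hd2, Finset.sum_union hd1]
  have hA : ∑ i ∈ Finset.Icc 1 k, ((Finset.Icc 1 (2 * k + 2)).filter
        (fun j => (i ≤ j ∨ i ≤ 2 * k) ∧ v = phi k j - phi k i)).card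
      = (min (k : ℤ) (v + k) + 1 - max 1 (v + 1)).toNat
        + (min (k : ℤ) (v + k + 1) + 1 - max 1 v).toNat := by
    have hpt : ∀ i ∈ Finset.Icc 1 k, ((Finset.Icc 1 (2 * k + 2)).filter
          (fun j => (i ≤ j ∨ i ≤ 2 * k) ∧ v = phi k j - phi k i)).card
        = (if v + 1 ≤ (i : ℤ) ∧ (i : ℤ) ≤ v + k then 1 else 0)
          + (if v ≤ (i : ℤ) ∧ (i : ℤ) ≤ v + k + 1 then 1 else 0) := by
      intro i hi
      simp only [Finset.mem_Icc] at hi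
      rw [inner_card k hk v i (by omega) (by omega)]
      have hphi : phi k i = 1 - (i : ℤ) := by rw [phi, if_pos (by omega)]
      rw [hphi, if_pos (by omega : i ≤ 2 * k)]
      push_cast
      split_ifs <;> omega
    rw [Finset.sum_congr rfl hpt, Finset.sum_add_distrib, ← Finset.card_filter,
      ← Finset.card_filter, card_Icc_filter_int 1 k (le_refl 1) (v + 1) (v + k),
      card_Icc_filter_int 1 k (le_refl 1) v (v + k + 1)]
    push_cast
    omega
  have hB : ∑ i ∈ Finset.Icc (k + 1) (2 * k), ((Finset.Icc 1 (2 * k + 2)).filter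
        (fun j => (i ≤ j ∨ i ≤ 2 * k) ∧ v = phi k j - phi k i)).card
      = (min (2 * (k : ℤ)) (2 * k + 1 - v) + 1 - max ((k : ℤ) + 1) ((k : ℤ) + 2 - v)).toNat
        + (min (2 * (k : ℤ)) (2 * k + 2 - v) + 1 - max ((k : ℤ) + 1) ((k : ℤ) + 1 - v)).toNat := by
    have hpt : ∀ i ∈ Finset.Icc (k + 1) (2 * k), ((Finset.Icc 1 (2 * k + 2)).filter
          (fun j => (i ≤ j ∨ i ≤ 2 * k) ∧ v = phi k j - phi k i)).card
        = (if (k : ℤ) + 2 - v ≤ (i : ℤ) ∧ (i : ℤ) ≤ 2 * k + 1 - v then 1 else 0)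
          + (if (k : ℤ) + 1 - v ≤ (i : ℤ) ∧ (i : ℤ) ≤ 2 * k + 2 - v then 1 else 0) := by
      intro i hi
      simp only [Finset.mem_Icc] at hi
      rw [inner_card k hk v i (by omega) (by omega)]
      have hphi : phi k i = (i : ℤ) - (2 * k + 1) := by rw [phi, if_neg (by omega)]
      rw [hphi, if_pos (by omega : i ≤ 2 * k)]
      push_cast
      split_ifs <;> omega
    rw [Finset.sum_congr rfl hpt, Finset.sum_add_distrib, ← Finset.card_filter,
      ← Finset.card_filter,
      card_Icc_filter_int (k + 1) (2 * k) (by omega) ((k : ℤ) + 2 - v) (2 * k + 1 - v),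
      card_Icc_filter_int (k + 1) (2 * k) (by omega) ((k : ℤ) + 1 - v) (2 * k + 2 - v)]
    push_cast
    omega
  have hC : ∑ i ∈ Finset.Icc (2 * k + 1) (2 * k + 2), ((Finset.Icc 1 (2 * k + 2)).filter
        (fun j => (i ≤ j ∨ i ≤ 2 * k) ∧ v = phi k j - phi k i)).card
      = (if 0 ≤ v ∧ v ≤ 1 then 1 else 0) + (if v = 0 then 1 else 0) := by
    have hpair : Finset.Icc (2 * k + 1) (2 * k + 2) = {2 * k + 1, 2 * k + 2} := by
      ext i; simp only [Finset.mem_Icc, Finset.mem_insert, Finset.mem_singleton]; omega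
    rw [hpair, Finset.sum_pair (by omega)]
    have e1 := inner_card k hk v (2 * k + 1) (by omega) (by omega)
    have e2 := inner_card k hk v (2 * k + 2) (by omega) (by omega)
    have hphi1 : phi k (2 * k + 1) = 0 := by
      rw [phi, if_neg (by omega)]; push_cast; ring
    have hphi2 : phi k (2 * k + 2) = 1 := by
      rw [phi, if_neg (by omega)]; push_cast; ring
    rw [hphi1] at e1
    rw [hphi2] at e2
    rw [if_neg (by omega : ¬ (2 * k + 1 ≤ 2 * k))] at e1
    rw [if_neg (by omega : ¬ (2 * k + 2 ≤ 2 * k))] at e2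
    rw [hphi1, hphi2, e1, e2]
    push_cast
    split_ifs <;> omega
  rw [hA, hB, hC]
lemma spec_eq (hk : 1 ≤ k) :
    spectrum [2 * k, 1, 1] [2 * k + 2]
      = Multiset.replicate 1 (-(k : ℤ)) + Multiset.replicate 1 ((k : ℤ) + 1) +
          ∑ i ∈ Finset.Icc 1 k,
            (Multiset.replicate (4 * i) ((i : ℤ) - k) +
              Multiset.replicate (4 * i) ((k : ℤ) - i + 1)) := by
  have hsum : [2 * k, 1, 1].sum = 2 * k + 2 := by simp
  unfold spectrum
  rw [hsum]
  have hmain : spectrumBlock [2 * k, 1, 1] [2 * k + 2]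
        (Finset.Icc 1 (2 * k + 2)) (Finset.Icc 1 (2 * k + 2))
      = ({0} : Multiset ℤ) + (Multiset.replicate 1 (-(k : ℤ)) + Multiset.replicate 1 ((k : ℤ) + 1) +
          ∑ i ∈ Finset.Icc 1 k,
            (Multiset.replicate (4 * i) ((i : ℤ) - k) +
              Multiset.replicate (4 * i) ((k : ℤ) - i + 1))) := by
    rw [Multiset.ext]
    intro v
    rw [sb_eq k hk, lhs_count k hk v, Multiset.count_add, Multiset.count_singleton,
      rhs_count k hk v]
    push_cast
    split_ifs <;> omega
  rw [hmain, add_tsub_cancel_left]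

lemma spec_count (hk : 1 ≤ k) (v : ℤ) :
    Multiset.count v (spectrum [2 * k, 1, 1] [2 * k + 2])
      = (if v = -(k : ℤ) then 1 else 0) + (if v = (k : ℤ) + 1 then 1 else 0)
        + (if 1 ≤ v + k ∧ v + k ≤ k then (4 * (v + (k : ℤ))).toNat else 0)
        + (if 1 ≤ (k : ℤ) + 1 - v ∧ (k : ℤ) + 1 - v ≤ k then (4 * ((k : ℤ) + 1 - v)).toNat else 0) := by
  rw [spec_eq k hk, rhs_count k hk v]
lemma spec_toFinset (hk : 1 ≤ k) :
    (spectrum [2 * k, 1, 1] [2 * k + 2]).toFinset = Finset.Icc (-(k : ℤ)) ((k : ℤ) + 1) := by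
  ext v
  rw [Multiset.mem_toFinset, ← Multiset.count_pos, spec_count k hk v, Finset.mem_Icc]
  split_ifs <;> omega

lemma sort_Icc_eq (hk : 1 ≤ k) :
    (Finset.Icc (-(k : ℤ)) ((k : ℤ) + 1)).sort (· ≤ ·)
      = (List.range (2 * k + 2)).map (fun i : ℕ => (i : ℤ) - k) := by
  have hnodup : ((List.range (2 * k + 2)).map (fun i : ℕ => (i : ℤ) - k)).Nodup := by
    refine List.Nodup.map ?_ List.nodup_range
    intro a b hab
    have hab' : (a : ℤ) - k = (b : ℤ) - k := hab
    omega
  have hfin : ((List.range (2 * k + 2)).map (fun i : ℕ => (i : ℤ) - k) : Multiset ℤ)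
      = (Finset.Icc (-(k : ℤ)) ((k : ℤ) + 1)).val := by
    have h2 : (⟨((List.range (2 * k + 2)).map (fun i : ℕ => (i : ℤ) - k) : Multiset ℤ), hnodup⟩ :
        Finset ℤ) = Finset.Icc (-(k : ℤ)) ((k : ℤ) + 1) := by
      refine Finset.ext fun v => ?_
      rw [Finset.mem_Icc]
      show v ∈ (List.range (2 * k + 2)).map (fun i : ℕ => (i : ℤ) - k) ↔ _
      rw [List.mem_map]
      simp only [List.mem_range]
      constructor
      · rintro ⟨i, hi, rfl⟩; omega
      · intro hv
        exact ⟨(v + k).toNat, by omega, by omega⟩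
    exact congrArg Finset.val h2
  refine (fun hp hs => List.Perm.eq_of_pairwise' (Finset.pairwise_sort _ _) hs hp) ?_ ?_
  · rw [← Multiset.coe_eq_coe, Finset.sort_eq, ← hfin]
  · rw [List.pairwise_map]
    refine List.pairwise_lt_range.imp ?_
    intro a b hab
    omega
def Fc (k : ℕ) (w : ℤ) : ℤ :=
  (if w = -(k : ℤ) then 1 else 0) + (if w = (k : ℤ) + 1 then 1 else 0)
    + (if 1 ≤ w + k ∧ w + k ≤ k then 4 * (w + (k : ℤ)) else 0)
    + (if 1 ≤ (k : ℤ) + 1 - w ∧ (k : ℤ) + 1 - w ≤ k then 4 * ((k : ℤ) + 1 - w) else 0)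

lemma Fc_nonneg (w : ℤ) : 0 ≤ Fc k w := by
  unfold Fc; split_ifs <;> omega

lemma count_eq_Fc (hk : 1 ≤ k) (w : ℤ) :
    Multiset.count w (spectrum [2 * k, 1, 1] [2 * k + 2]) = (Fc k w).toNat := by
  rw [spec_count k hk w]; unfold Fc; split_ifs <;> omega

lemma Fc_eval_lo (hk : 1 ≤ k) : Fc k (-(k : ℤ)) = 1 := by
  unfold Fc; split_ifs <;> omega

lemma Fc_eval_hi (hk : 1 ≤ k) : Fc k ((k : ℤ) + 1) = 1 := by
  unfold Fc; split_ifs <;> omega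

lemma Fc_eval_neg (hk : 1 ≤ k) (w : ℤ) (hw1 : 1 - (k : ℤ) ≤ w) (hw2 : w ≤ 0) :
    Fc k w = 4 * (w + k) := by
  unfold Fc; split_ifs <;> omega

lemma Fc_eval_pos (hk : 1 ≤ k) (w : ℤ) (hw1 : 1 ≤ w) (hw2 : w ≤ (k : ℤ)) :
    Fc k w = 4 * ((k : ℤ) + 1 - w) := by
  unfold Fc; split_ifs <;> omega

lemma Fc_log (hk : 1 ≤ k) (v : ℤ) (h1 : 1 - (k : ℤ) ≤ v) (h2 : v ≤ (k : ℤ)) :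
    Fc k (v - 1) * Fc k (v + 1) ≤ Fc k v ^ 2 := by
  rcases lt_or_ge v 1 with hv | hv
  · rw [Fc_eval_neg k hk v h1 (by omega)]
    by_cases hb : v = 1 - (k : ℤ)
    · rw [show v - 1 = -(k : ℤ) by omega, Fc_eval_lo k hk]
      by_cases hc : v + 1 ≤ 0
      · rw [Fc_eval_neg k hk (v + 1) (by omega) hc]; nlinarith
      · rw [show v + 1 = 1 by omega, Fc_eval_pos k hk 1 le_rfl (by omega)]; nlinarith
    · rw [Fc_eval_neg k hk (v - 1) (by omega) (by omega)]
      by_cases hc : v + 1 ≤ 0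
      · rw [Fc_eval_neg k hk (v + 1) (by omega) hc]; nlinarith
      · rw [show v + 1 = 1 by omega, Fc_eval_pos k hk 1 le_rfl (by omega)]; nlinarith
  · rw [Fc_eval_pos k hk v hv h2]
    by_cases hb : v = (k : ℤ)
    · rw [show v + 1 = (k : ℤ) + 1 by omega, Fc_eval_hi k hk]
      by_cases hc : 1 ≤ v - 1
      · rw [Fc_eval_pos k hk (v - 1) hc (by omega)]; nlinarith
      · rw [Fc_eval_neg k hk (v - 1) (by omega) (by omega)]; nlinarith
    · rw [Fc_eval_pos k hk (v + 1) (by omega) (by omega)]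
      by_cases hc : 1 ≤ v - 1
      · rw [Fc_eval_pos k hk (v - 1) hc (by omega)]; nlinarith
      · rw [Fc_eval_neg k hk (v - 1) (by omega) (by omega)]; nlinarith

lemma log_concave (hk : 1 ≤ k) :
    HasLogConcaveSpectrum (spectrum [2 * k, 1, 1] [2 * k + 2]) := by
  intro i hi hlen
  rw [spec_toFinset k hk, sort_Icc_eq k hk] at hlen ⊢
  rw [List.length_map, List.length_range] at hlen
  have hgetD : ∀ m : ℕ, m < 2 * k + 2 →
      ((List.range (2 * k + 2)).map (fun i : ℕ => (i : ℤ) - k)).getD m 0 = (m : ℤ) - k := by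
    intro m hm
    rw [List.getD_eq_getElem _ _ (by simp [hm])]
    simp
  rw [hgetD (i - 1) (by omega), hgetD i (by omega), hgetD (i + 1) (by omega)]
  rw [show ((i - 1 : ℕ) : ℤ) - k = ((i : ℤ) - k) - 1 by omega,
    show ((i + 1 : ℕ) : ℤ) - k = ((i : ℤ) - k) + 1 by push_cast; ring]
  rw [count_eq_Fc k hk, count_eq_Fc k hk, count_eq_Fc k hk]
  have hv1 : 1 - (k : ℤ) ≤ (i : ℤ) - k := by omega
  have hv2 : (i : ℤ) - k ≤ (k : ℤ) := by omega
  have key := Fc_log k hk ((i : ℤ) - k) hv1 hv2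
  have n1 := Fc_nonneg k ((i : ℤ) - k - 1)
  have n2 := Fc_nonneg k ((i : ℤ) - k + 1)
  have n3 := Fc_nonneg k ((i : ℤ) - k)
  zify
  rw [Int.toNat_of_nonneg n1, Int.toNat_of_nonneg n2, Int.toNat_of_nonneg n3]
  exact key
end Work

/-- For `k ≥ 1`, the spectrum of the Frobenius type-A seaweed `p^A(2k|1|1 / 2k+2)` is
`{-k, k+1} ∪ ⋃_{i=1}^{k} {(-k+i)^{4i}, (k-i+1)^{4i}}`, and the seaweed has the
log-concave spectrum property. -/
theorem statement15 (k : ℕ) (hk : 1 ≤ k) :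
    spectrum [2 * k, 1, 1] [2 * k + 2]
        = Multiset.replicate 1 (-(k : ℤ)) + Multiset.replicate 1 ((k : ℤ) + 1) +
          ∑ i ∈ Finset.Icc 1 k,
            (Multiset.replicate (4 * i) ((i : ℤ) - k) +
              Multiset.replicate (4 * i) ((k : ℤ) - i + 1)) ∧
    HasLogConcaveSpectrum (spectrum [2 * k, 1, 1] [2 * k + 2]) := by
  exact ⟨spec_eq k hk, log_concave k hk⟩

end Seaweed
end
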